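/- Transducer Hadamard test. Let H and L be finite-dimensional complex inner product spaces, let φ₀, φ₁ ∈ H be orthonormal vectors, let γ, δ ∈ ℂ, and set ψ = γφ₁ + δφ₀. Let V be a unitary on H ⊕ L and w ∈ L be such that V(ψ ⊕ w) = (γφ₁ − δφ₀) ⊕ w. Let cV := I ⊗ |0⟩⟨0| + V ⊗ |1⟩⟨1| on (H ⊕ L) ⊗ ℂ², let Had be the Hadamard gate on ℂ², and define V' := (I ⊗ Had) ∘ cV ∘ (I ⊗ Had). Then V'( ψ ⊗ |0⟩ + (1/√2) w ⊗ |−⟩ ) = γ φ₁ ⊗ |0⟩ + δ φ₀ ⊗ |1⟩ + (1/√2) w ⊗ |−⟩, where |−⟩ = (|0⟩ − |1⟩)/√2. In particular the marking map ψ ⊗ |0⟩ ↦ γφ₁ ⊗ |0⟩ + δφ₀ ⊗ |1⟩ is transduced with catalyst of squared norm ‖w‖²/2. -/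

import Mathlib

open scoped InnerProductSpace

/-- Transducer Hadamard test: if the unitary `V` on `H ⊕ L` transduces
`ψ = γφ₁ + δφ₀` into `γφ₁ − δφ₀` with catalyst `w`, then
`V' = (I ⊗ Had) ∘ cV ∘ (I ⊗ Had)` maps
`ψ ⊗ |0⟩ + (1/√2) w ⊗ |−⟩` to `γφ₁ ⊗ |0⟩ + δφ₀ ⊗ |1⟩ + (1/√2) w ⊗ |−⟩`,
i.e. it transduces the marking map with a catalyst of squared norm `‖w‖²/2`.
Here `(H ⊕ L) ⊗ ℂ²` is modelled as pairs: `(a, b)` stands for `a ⊗ |0⟩ + b ⊗ |1⟩`,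
with `emb x y = x ⊕ y : H ⊕ L` and `pair a b = a ⊗ |0⟩ + b ⊗ |1⟩`. -/
theorem stmt13 {H L : Type*}
    [NormedAddCommGroup H] [InnerProductSpace ℂ H] [FiniteDimensional ℂ H]
    [NormedAddCommGroup L] [InnerProductSpace ℂ L] [FiniteDimensional ℂ L]
    (φ₀ φ₁ : H) (hφ₀ : ‖φ₀‖ = 1) (hφ₁ : ‖φ₁‖ = 1) (hortho : ⟪φ₀, φ₁⟫_ℂ = 0)
    (γ δ : ℂ) (ψ : H) (hψ : ψ = γ • φ₁ + δ • φ₀)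
    (emb : H → L → WithLp 2 (H × L))
    (hemb : ∀ x y, emb x y = (WithLp.equiv 2 (H × L)).symm (x, y))
    (V : WithLp 2 (H × L) ≃ₗᵢ[ℂ] WithLp 2 (H × L))
    (w : L) (hV : V (emb ψ w) = emb (γ • φ₁ - δ • φ₀) w)
    (pair : WithLp 2 (H × L) → WithLp 2 (H × L) →
      WithLp 2 (WithLp 2 (H × L) × WithLp 2 (H × L)))
    (hpair : ∀ a b, pair a b =
      (WithLp.equiv 2 (WithLp 2 (H × L) × WithLp 2 (H × L))).symm (a, b))
    (cV Had V' :
      WithLp 2 (WithLp 2 (H × L) × WithLp 2 (H × L)) →ₗ[ℂ]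
        WithLp 2 (WithLp 2 (H × L) × WithLp 2 (H × L)))
    (hcV : ∀ a b, cV (pair a b) = pair a (V b))
    (hHad : ∀ a b, Had (pair a b) =
      pair (((Real.sqrt 2 : ℝ) : ℂ)⁻¹ • (a + b)) (((Real.sqrt 2 : ℝ) : ℂ)⁻¹ • (a - b)))
    (hV' : V' = Had ∘ₗ cV ∘ₗ Had) :
    V' (pair (emb ψ ((1 / 2 : ℂ) • w)) (emb 0 (-(1 / 2 : ℂ) • w))) =
      pair (emb (γ • φ₁) ((1 / 2 : ℂ) • w)) (emb (δ • φ₀) (-(1 / 2 : ℂ) • w)) ∧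
    ‖pair (emb 0 ((1 / 2 : ℂ) • w)) (emb 0 (-(1 / 2 : ℂ) • w))‖ ^ 2 = ‖w‖ ^ 2 / 2 := by

  have hs : (((Real.sqrt 2 : ℝ) : ℂ)⁻¹) * (((Real.sqrt 2 : ℝ) : ℂ)⁻¹) = (1/2 : ℂ) := by
    rw [← mul_inv]
    norm_cast
    rw [Real.mul_self_sqrt (by norm_num)]
    norm_num
  set s : ℂ := ((Real.sqrt 2 : ℝ) : ℂ)⁻¹ with hsdef
  have hadd : ∀ (x x' : H) (y y' : L), emb x y + emb x' y' = emb (x + x') (y + y') := by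
    intro x x' y y'; simp only [hemb]; rfl
  have hsub : ∀ (x x' : H) (y y' : L), emb x y - emb x' y' = emb (x - x') (y - y') := by
    intro x x' y y'; simp only [hemb]; rfl
  have hsmul : ∀ (c : ℂ) (x : H) (y : L), c • emb x y = emb (c • x) (c • y) := by
    intro c x y; simp only [hemb]; rfl
  constructor
  · rw [hV']
    simp only [LinearMap.comp_apply]
    rw [hHad, hcV]
    rw [hadd, hsub]
    have e1 : ψ + 0 = ψ := add_zero ψ
    have e2 : (1/2 : ℂ) • w + -(1/2 : ℂ) • w = 0 := by
      rw [neg_smul, add_neg_cancel]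
    have e3 : ψ - 0 = ψ := sub_zero ψ
    have e4 : (1/2 : ℂ) • w - -(1/2 : ℂ) • w = w := by
      rw [neg_smul, sub_neg_eq_add, ← add_smul]; norm_num
    rw [e1, e2, e3, e4]
    rw [hsmul, map_smul, hV, ← hsmul, hHad]
    rw [← smul_add, ← smul_sub, smul_smul, smul_smul, hs]
    rw [hadd, hsub, hsmul, hsmul]
    congr 2
    · rw [hψ]; module
    · module
    · rw [hψ]; module
    · module
  · rw [hpair, hemb, hemb]
    rw [WithLp.prod_norm_sq_eq_of_L2]
    have h1 : ((WithLp.equiv 2 (WithLp 2 (H × L) × WithLp 2 (H × L))).symm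
        ((WithLp.equiv 2 (H × L)).symm (0, (1/2 : ℂ) • w),
         (WithLp.equiv 2 (H × L)).symm (0, -(1/2 : ℂ) • w))).fst
        = (WithLp.equiv 2 (H × L)).symm (0, (1/2 : ℂ) • w) := rfl
    have h2 : ((WithLp.equiv 2 (WithLp 2 (H × L) × WithLp 2 (H × L))).symm
        ((WithLp.equiv 2 (H × L)).symm (0, (1/2 : ℂ) • w),
         (WithLp.equiv 2 (H × L)).symm (0, -(1/2 : ℂ) • w))).snd
        = (WithLp.equiv 2 (H × L)).symm (0, -(1/2 : ℂ) • w) := rfl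
    rw [h1, h2, WithLp.prod_norm_sq_eq_of_L2, WithLp.prod_norm_sq_eq_of_L2]
    have hf1 : ((WithLp.equiv 2 (H × L)).symm ((0 : H), (1/2 : ℂ) • w)).fst = (0 : H) := rfl
    have hf2 : ((WithLp.equiv 2 (H × L)).symm ((0 : H), (1/2 : ℂ) • w)).snd = (1/2 : ℂ) • w := rfl
    have hf3 : ((WithLp.equiv 2 (H × L)).symm ((0 : H), -(1/2 : ℂ) • w)).fst = (0 : H) := rfl
    have hf4 : ((WithLp.equiv 2 (H × L)).symm ((0 : H), -(1/2 : ℂ) • w)).snd = -(1/2 : ℂ) • w := rfl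
    rw [hf1, hf2, hf3, hf4]
    rw [norm_zero, norm_smul, norm_smul]
    simp
    ring
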